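/- (A-compactness for satisfiability.) Let A be a fixed finite MTL-chain and P a predicate language. If Σ is a set of P-sentences such that every finite subset Σ₀ ⊆ Σ has an A-model, then Σ has an A-model. -/

import Mathlib

noncomputable section
open Classical

universe u

/-- A finite MTL-chain: a finite linearly ordered set with least and greatest
elements, a commutative monoid operation `*` with unit `1 = ⊤` that is monotone
in each argument, and the residuum determined by `a * b ≤ c ↔ a ≤ resid b c`. -/
class MTLChain (A : Type u) extends Fintype A, LinearOrder A, CommMonoid A, BoundedOrder A where
  one_eq_top : (1 : A) = ⊤
  mul_mono : ∀ {a b : A}, a ≤ b → ∀ c : A, c * a ≤ c * b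
  resid : A → A → A
  resid_galois : ∀ a b c : A, a * b ≤ c ↔ a ≤ resid b c

noncomputable instance MTLChain.toCompleteLinearOrder (A : Type u) [MTLChain A] :
    CompleteLinearOrder A :=
  Fintype.toCompleteLinearOrder A

/-- A predicate language: predicate symbols and function symbols, each with
a finite arity.  (Nullary predicates are truth constants, nullary functions
are individual constants.)  Crisp equality `≈` is built into formulas. -/
structure Lang : Type (u + 1) where
  Pred : Type u
  predAr : Pred → ℕ
  Func : Type u
  funcAr : Func → ℕ

variable {A : Type u} [MTLChain A] {L : Lang.{u}}

/-- Terms of a predicate language, with variables indexed by `ℕ`. -/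
inductive Term (L : Lang.{u}) : Type u where
  | var : ℕ → Term L
  | func (f : L.Func) (ts : Fin (L.funcAr f) → Term L) : Term L

/-- Formulas: atomic formulas (predicates applied to terms, and crisp equality),
strong conjunction `&`, weak conjunction `∧`, weak disjunction `∨`,
implication `→`, and the quantifiers. -/
inductive Formula (L : Lang.{u}) : Type u where
  | rel (P : L.Pred) (ts : Fin (L.predAr P) → Term L) : Formula L
  | eq (t₁ t₂ : Term L) : Formula L
  | sconj (φ ψ : Formula L) : Formula L
  | wconj (φ ψ : Formula L) : Formula L
  | wdisj (φ ψ : Formula L) : Formula L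
  | impl (φ ψ : Formula L) : Formula L
  | all (x : ℕ) (φ : Formula L) : Formula L
  | ex (x : ℕ) (φ : Formula L) : Formula L

/-- An `A`-structure for the language `L`: a nonempty domain, an `A`-valued
interpretation of each predicate symbol, and an interpretation of each
function symbol. -/
structure Structure (L : Lang.{u}) (A : Type u) [MTLChain A] : Type (u + 1) where
  Dom : Type u
  [dom_nonempty : Nonempty Dom]
  funMap (f : L.Func) : (Fin (L.funcAr f) → Dom) → Dom
  relMap (P : L.Pred) : (Fin (L.predAr P) → Dom) → A

attribute [instance] Structure.dom_nonempty

/-- Value of a term under an evaluation of the variables. -/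
def Term.val (M : Structure L A) (v : ℕ → M.Dom) : Term L → M.Dom
  | .var n => v n
  | .func f ts => M.funMap f fun i => (ts i).val M v

/-- Truth value of a formula in an `A`-structure under an evaluation of the
variables.  Equality is crisp, `&` is interpreted by `*`, `∧` by minimum,
`∨` by maximum, `→` by the residuum, `∀` by infimum (= minimum) and `∃` by
supremum (= maximum) over the domain. -/
def Formula.val (M : Structure L A) : Formula L → (ℕ → M.Dom) → A
  | .rel P ts, v => M.relMap P fun i => (ts i).val M v
  | .eq t₁ t₂, v => if t₁.val M v = t₂.val M v then 1 else ⊥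
  | .sconj φ ψ, v => φ.val M v * ψ.val M v
  | .wconj φ ψ, v => φ.val M v ⊓ ψ.val M v
  | .wdisj φ ψ, v => φ.val M v ⊔ ψ.val M v
  | .impl φ ψ, v => MTLChain.resid (φ.val M v) (ψ.val M v)
  | .all x φ, v => ⨅ a : M.Dom, φ.val M (Function.update v x a)
  | .ex x φ, v => ⨆ a : M.Dom, φ.val M (Function.update v x a)

/-- Free variables of a term. -/
def Term.fvars : Term L → Set ℕ
  | .var n => {n}
  | .func _ ts => ⋃ i, (ts i).fvars

/-- Free variables of a formula. -/
def Formula.fvars : Formula L → Set ℕ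
  | .rel _ ts => ⋃ i, (ts i).fvars
  | .eq t₁ t₂ => t₁.fvars ∪ t₂.fvars
  | .sconj φ ψ => φ.fvars ∪ ψ.fvars
  | .wconj φ ψ => φ.fvars ∪ ψ.fvars
  | .wdisj φ ψ => φ.fvars ∪ ψ.fvars
  | .impl φ ψ => φ.fvars ∪ ψ.fvars
  | .all x φ => φ.fvars \ {x}
  | .ex x φ => φ.fvars \ {x}

/-- A sentence is a formula with no free variables. -/
def Formula.IsSentence (φ : Formula L) : Prop := φ.fvars = ∅

/-- `φ` is valid in `M` (i.e. `‖φ‖_M = 1`). -/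
def Valid (M : Structure L A) (φ : Formula L) : Prop :=
  ∀ v : ℕ → M.Dom, φ.val M v = 1

/-- `M` is an `A`-model of the set of sentences `T`. -/
def Models (M : Structure L A) (T : Set (Formula L)) : Prop :=
  ∀ φ ∈ T, Valid M φ

/-- Two structures are elementarily equivalent if the same sentences are valid
in both (i.e. they have the same theory). -/
def ElemEquiv (M N : Structure L A) : Prop :=
  ∀ φ : Formula L, φ.IsSentence → (Valid M φ ↔ Valid N φ)

/-- `g : M → N` is a homomorphism of `A`-structures: it commutes with the
interpretation of function symbols, and preserves truth (value `1`) of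
atomic predicates. -/
structure IsHom (M N : Structure L A) (g : M.Dom → N.Dom) : Prop where
  map_fun : ∀ (f : L.Func) (d : Fin (L.funcAr f) → M.Dom),
    g (M.funMap f d) = N.funMap f (g ∘ d)
  map_rel : ∀ (P : L.Pred) (d : Fin (L.predAr P) → M.Dom),
    M.relMap P d = 1 → N.relMap P (g ∘ d) = 1

/-- Atomic formulas. -/
inductive IsAtomicFormula : Formula L → Prop
  | rel (P : L.Pred) (ts : Fin (L.predAr P) → Term L) : IsAtomicFormula (.rel P ts)
  | eq (t₁ t₂ : Term L) : IsAtomicFormula (.eq t₁ t₂)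

/-- Quantifier-free formulas built from atomic formulas using only `∧` and `&`. -/
inductive QFConj : Formula L → Prop
  | atom {φ : Formula L} : IsAtomicFormula φ → QFConj φ
  | sconj {φ ψ : Formula L} : QFConj φ → QFConj ψ → QFConj (.sconj φ ψ)
  | wconj {φ ψ : Formula L} : QFConj φ → QFConj ψ → QFConj (.wconj φ ψ)

/-- Quantifier-free formulas built from atomic formulas using only `∧`. -/
inductive QFWConj : Formula L → Prop
  | atom {φ : Formula L} : IsAtomicFormula φ → QFWConj φ
  | wconj {φ ψ : Formula L} : QFWConj φ → QFWConj ψ → QFWConj (.wconj φ ψ)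

/-- Quantifier-free formulas built from atomic formulas using only `&`. -/
inductive QFSConj : Formula L → Prop
  | atom {φ : Formula L} : IsAtomicFormula φ → QFSConj φ
  | sconj {φ ψ : Formula L} : QFSConj φ → QFSConj ψ → QFSConj (.sconj φ ψ)

/-- Quantifier-free formulas built from atomic formulas using only `∧`, `∨` and `&`. -/
inductive QFPos : Formula L → Prop
  | atom {φ : Formula L} : IsAtomicFormula φ → QFPos φ
  | sconj {φ ψ : Formula L} : QFPos φ → QFPos ψ → QFPos (.sconj φ ψ)
  | wconj {φ ψ : Formula L} : QFPos φ → QFPos ψ → QFPos (.wconj φ ψ)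
  | wdisj {φ ψ : Formula L} : QFPos φ → QFPos ψ → QFPos (.wdisj φ ψ)

/-- Positive-primitive (∧&-primitive) formulas: `(∃ x̄) ψ` with `ψ`
quantifier-free built from atomic formulas using only `∧` and `&`. -/
inductive IsPP : Formula L → Prop
  | base {φ : Formula L} : QFConj φ → IsPP φ
  | ex {φ : Formula L} (x : ℕ) : IsPP φ → IsPP (.ex x φ)

/-- ∧-primitive formulas. -/
inductive IsWPrimitive : Formula L → Prop
  | base {φ : Formula L} : QFWConj φ → IsWPrimitive φ
  | ex {φ : Formula L} (x : ℕ) : IsWPrimitive φ → IsWPrimitive (.ex x φ)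

/-- &-primitive formulas. -/
inductive IsSPrimitive : Formula L → Prop
  | base {φ : Formula L} : QFSConj φ → IsSPrimitive φ
  | ex {φ : Formula L} (x : ℕ) : IsSPrimitive φ → IsSPrimitive (.ex x φ)

/-- Existential positive formulas: `(∃ x̄) ψ` with `ψ` quantifier-free built
from atomic formulas using only `∧`, `∨` and `&`. -/
inductive IsExPos : Formula L → Prop
  | base {φ : Formula L} : QFPos φ → IsExPos φ
  | ex {φ : Formula L} (x : ℕ) : IsExPos φ → IsExPos (.ex x φ)

/-- The `A`-direct product of a nonempty family of `A`-structures: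
cartesian product domain, coordinatewise interpretation of function symbols,
and predicates interpreted by the minimum of the coordinatewise values. -/
def dirProd {I : Type u} [Nonempty I] (Ms : I → Structure L A) : Structure L A where
  Dom := ∀ i, (Ms i).Dom
  funMap f d := fun i => (Ms i).funMap f fun k => d k i
  relMap P d := ⨅ i, (Ms i).relMap P fun k => d k i

/-- The data of a weak `A`-direct product of a family of `A`-structures: an
interpretation of the predicate symbols on the cartesian product taking value
`1` exactly when all the coordinatewise values are `1`. -/
structure WeakProdData {I : Type u} (Ms : I → Structure L A) : Type u where
  relMap (P : L.Pred) : (Fin (L.predAr P) → ∀ i, (Ms i).Dom) → A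
  rel_one_iff : ∀ (P : L.Pred) (d : Fin (L.predAr P) → ∀ i, (Ms i).Dom),
    relMap P d = 1 ↔ ∀ i, (Ms i).relMap P (fun k => d k i) = 1

/-- The weak `A`-direct product structure determined by such data. -/
def WeakProdData.toStructure {I : Type u} [Nonempty I] {Ms : I → Structure L A}
    (W : WeakProdData Ms) : Structure L A where
  Dom := ∀ i, (Ms i).Dom
  funMap f d := fun i => (Ms i).funMap f fun k => d k i
  relMap := W.relMap

/-! ### Ultraproduct machinery -/

section Ulim

variable {I : Type u} (U : Ultrafilter I)

lemma exists_ulim (f : I → A) : ∃ a : A, {i | f i = a} ∈ U := by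
  by_contra h
  push_neg at h
  have hc : ∀ a : A, {i | f i = a}ᶜ ∈ U := fun a =>
    Ultrafilter.compl_mem_iff_notMem.2 (h a)
  have h2 : (⋂ a : A, {i | f i = a}ᶜ) ∈ U := Filter.iInter_mem.2 hc
  obtain ⟨i, hi⟩ := Filter.nonempty_of_mem h2
  simp only [Set.mem_iInter, Set.mem_compl_iff, Set.mem_setOf_eq] at hi
  exact hi (f i) rfl

/-- The ultralimit (standard part) of a function into the finite chain `A`. -/
def ulim (f : I → A) : A := (exists_ulim U f).choose

lemma ulim_mem (f : I → A) : {i | f i = ulim U f} ∈ U := (exists_ulim U f).choose_spec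

lemma ulim_eq {f : I → A} {a : A} (h : {i | f i = a} ∈ U) : ulim U f = a := by
  obtain ⟨i, h1, h2⟩ := Filter.nonempty_of_mem (Filter.inter_mem (ulim_mem U f) h)
  exact h1.symm.trans h2

lemma ulim_congr {f g : I → A} (h : {i | f i = g i} ∈ U) : ulim U f = ulim U g :=
  ulim_eq U (Filter.mem_of_superset (Filter.inter_mem h (ulim_mem U g))
    (fun i hi => hi.1.trans hi.2))

lemma ulim_map₂ (op : A → A → A) (f g : I → A) :
    ulim U (fun i => op (f i) (g i)) = op (ulim U f) (ulim U g) :=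
  ulim_eq U (Filter.mem_of_superset (Filter.inter_mem (ulim_mem U f) (ulim_mem U g))
    (fun i hi => by simp only [Set.mem_setOf_eq]; rw [hi.1, hi.2]))

lemma ulim_le {f g : I → A} (h : {i | f i ≤ g i} ∈ U) : ulim U f ≤ ulim U g := by
  obtain ⟨i, h1, h2, h3⟩ := Filter.nonempty_of_mem
    (Filter.inter_mem (ulim_mem U f) (Filter.inter_mem (ulim_mem U g) h))
  calc ulim U f = f i := h1.symm
    _ ≤ g i := h3
    _ = ulim U g := h2

end Ulim

lemma exists_eq_iInf' {X : Type*} [Nonempty X] (f : X → A) : ∃ x, f x = ⨅ y, f y := by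
  have h1 : sInf (Set.range f) ∈ Set.range f :=
    Set.Nonempty.csInf_mem (Set.range_nonempty f) (Set.toFinite _)
  obtain ⟨x, hx⟩ := h1
  exact ⟨x, by rw [hx, sInf_range]⟩

lemma exists_eq_iSup' {X : Type*} [Nonempty X] (f : X → A) : ∃ x, f x = ⨆ y, f y := by
  have h1 : sSup (Set.range f) ∈ Set.range f :=
    Set.Nonempty.csSup_mem (Set.range_nonempty f) (Set.toFinite _)
  obtain ⟨x, hx⟩ := h1
  exact ⟨x, by rw [hx, sSup_range]⟩

section Ultra

variable {I : Type u} (U : Ultrafilter I) (Ms : I → Structure L A)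

/-- The setoid of `U`-a.e. equality on the product of the domains. -/
def psetoid : Setoid (∀ i, (Ms i).Dom) where
  r f g := {i | f i = g i} ∈ U
  iseqv := by
    refine ⟨fun f => ?_, fun {f g} h => ?_, fun {f g h} h1 h2 => ?_⟩
    · have : {i | f i = f i} = Set.univ := by ext i; simp
      rw [this]; exact Filter.univ_mem
    · have : {i | f i = g i} = {i | g i = f i} := by ext i; exact eq_comm
      rwa [this] at h
    · exact Filter.mem_of_superset (Filter.inter_mem h1 h2)
        (fun i hi => hi.1.trans hi.2)

/-- The ultraproduct structure. -/
def UStruct : Structure L A where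
  Dom := Quotient (psetoid U Ms)
  dom_nonempty := ⟨Quotient.mk _ (fun i => Classical.arbitrary _)⟩
  funMap f d := Quotient.mk _ (fun i => (Ms i).funMap f (fun k => (d k).out i))
  relMap P d := ulim U (fun i => (Ms i).relMap P (fun k => (d k).out i))

lemma out_ae (g : ∀ i, (Ms i).Dom) :
    {i | (Quotient.mk (psetoid U Ms) g).out i = g i} ∈ U :=
  @Quotient.mk_out _ (psetoid U Ms) g

lemma update_mk (v : ℕ → ∀ i, (Ms i).Dom) (x : ℕ) (w : ∀ i, (Ms i).Dom) :
    Function.update (fun n => Quotient.mk (psetoid U Ms) (v n)) x (Quotient.mk _ w)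
      = fun n => Quotient.mk (psetoid U Ms) (Function.update v x w n) := by
  funext n
  by_cases h : n = x
  · subst h; simp
  · simp [Function.update_apply, h]

lemma update_coord (v : ℕ → ∀ i, (Ms i).Dom) (x : ℕ) (w : ∀ i, (Ms i).Dom) (i : I) :
    (fun n => Function.update v x w n i)
      = Function.update (fun n => v n i) x (w i) := by
  funext n
  by_cases h : n = x
  · subst h; simp
  · simp [Function.update_apply, h]

lemma term_val_ustruct (t : Term L) (v : ℕ → ∀ i, (Ms i).Dom) :
    t.val (UStruct U Ms) (fun n => Quotient.mk _ (v n))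
      = Quotient.mk (psetoid U Ms) (fun i => t.val (Ms i) (fun n => v n i)) := by
  induction t with
  | var n => rfl
  | func f ts ih =>
    show Quotient.mk _ _ = _
    apply Quotient.sound
    have hk : ∀ k, {i | ((ts k).val (UStruct U Ms) (fun n => Quotient.mk _ (v n))).out i
        = (ts k).val (Ms i) (fun n => v n i)} ∈ U := by
      intro k
      rw [ih k]
      exact out_ae U Ms _
    have h2 : (⋂ k, {i | ((ts k).val (UStruct U Ms) (fun n => Quotient.mk _ (v n))).out i
        = (ts k).val (Ms i) (fun n => v n i)}) ∈ U := Filter.iInter_mem.2 hk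
    refine Filter.mem_of_superset h2 (fun i hi => ?_)
    simp only [Set.mem_iInter, Set.mem_setOf_eq] at hi ⊢
    show (Ms i).funMap f _ = (Ms i).funMap f _
    congr 1
    funext k
    exact hi k

/-- **Łoś's theorem** for the ultraproduct of `A`-structures. -/
lemma los (φ : Formula L) : ∀ v : ℕ → ∀ i, (Ms i).Dom,
    φ.val (UStruct U Ms) (fun n => Quotient.mk _ (v n))
      = ulim U (fun i => φ.val (Ms i) (fun n => v n i)) := by
  induction φ with
  | rel P ts =>
    intro v
    simp only [Formula.val]
    show ulim U _ = ulim U _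
    apply ulim_congr
    have hk : ∀ k, {i | ((ts k).val (UStruct U Ms) (fun n => Quotient.mk _ (v n))).out i
        = (ts k).val (Ms i) (fun n => v n i)} ∈ U := by
      intro k
      rw [term_val_ustruct]
      exact out_ae U Ms _
    refine Filter.mem_of_superset (Filter.iInter_mem.2 hk) (fun i hi => ?_)
    simp only [Set.mem_iInter, Set.mem_setOf_eq] at hi ⊢
    congr 1
    funext k
    exact hi k
  | eq t₁ t₂ =>
    intro v
    simp only [Formula.val]
    rw [term_val_ustruct, term_val_ustruct]
    by_cases h : Quotient.mk (psetoid U Ms) (fun i => t₁.val (Ms i) (fun n => v n i))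
        = Quotient.mk (psetoid U Ms) (fun i => t₂.val (Ms i) (fun n => v n i))
    · refine (if_pos h).trans ?_
      have hae : {i | t₁.val (Ms i) (fun n => v n i) = t₂.val (Ms i) (fun n => v n i)} ∈ U :=
        Quotient.eq.mp h
      exact (ulim_eq U (Filter.mem_of_superset hae (fun i hi => by
        simp only [Set.mem_setOf_eq] at hi ⊢
        simp only [Formula.val, if_pos hi]))).symm
    · refine (if_neg h).trans ?_
      have hae : {i | t₁.val (Ms i) (fun n => v n i) = t₂.val (Ms i) (fun n => v n i)}ᶜ ∈ U :=
        Ultrafilter.compl_mem_iff_notMem.2 (fun hm => h (Quotient.sound hm))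
      exact (ulim_eq U (Filter.mem_of_superset hae (fun i hi => by
        simp only [Set.mem_compl_iff, Set.mem_setOf_eq] at hi ⊢
        simp only [Formula.val, if_neg hi]))).symm
  | sconj φ ψ ihφ ihψ =>
    intro v
    simp only [Formula.val]
    rw [ihφ v, ihψ v]
    exact (ulim_map₂ U (· * ·) _ _).symm
  | wconj φ ψ ihφ ihψ =>
    intro v
    simp only [Formula.val]
    rw [ihφ v, ihψ v]
    exact (ulim_map₂ U (· ⊓ ·) _ _).symm
  | wdisj φ ψ ihφ ihψ =>
    intro v
    simp only [Formula.val]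
    rw [ihφ v, ihψ v]
    exact (ulim_map₂ U (· ⊔ ·) _ _).symm
  | impl φ ψ ihφ ihψ =>
    intro v
    simp only [Formula.val]
    rw [ihφ v, ihψ v]
    exact (ulim_map₂ U MTLChain.resid _ _).symm
  | all x φ ih =>
    intro v
    simp only [Formula.val]
    have key : ∀ w : ∀ i, (Ms i).Dom,
        φ.val (UStruct U Ms)
          (Function.update (fun n => Quotient.mk _ (v n)) x (Quotient.mk _ w))
        = ulim U (fun i => φ.val (Ms i)
            (Function.update (fun n => v n i) x (w i))) := by
      intro w
      refine (congrArg (φ.val (UStruct U Ms)) (update_mk U Ms v x w)).trans ?_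
      rw [ih]
      exact ulim_congr U (by
        refine Filter.univ_mem' (fun i => ?_)
        simp only [Set.mem_setOf_eq]
        rw [update_coord])
    apply le_antisymm
    · choose w hw using fun i => exists_eq_iInf'
        (fun m => φ.val (Ms i) (Function.update (fun n => v n i) x m))
      calc (⨅ c : (UStruct U Ms).Dom,
              φ.val (UStruct U Ms)
                (Function.update (fun n => Quotient.mk _ (v n)) x c))
          ≤ φ.val (UStruct U Ms)
              (Function.update (fun n => Quotient.mk _ (v n)) x (Quotient.mk _ w)) :=
            iInf_le _ _
        _ = ulim U (fun i => φ.val (Ms i) (Function.update (fun n => v n i) x (w i))) :=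
            key w
        _ = ulim U (fun i => ⨅ m, φ.val (Ms i) (Function.update (fun n => v n i) x m)) :=
            ulim_congr U (Filter.univ_mem' (fun i => hw i))
    · refine le_iInf (fun c => ?_)
      have hc : c = Quotient.mk _ c.out := (Quotient.out_eq c).symm
      rw [hc, key c.out]
      exact ulim_le U (Filter.univ_mem' (fun i => iInf_le _ _))
  | ex x φ ih =>
    intro v
    simp only [Formula.val]
    have key : ∀ w : ∀ i, (Ms i).Dom,
        φ.val (UStruct U Ms)
          (Function.update (fun n => Quotient.mk _ (v n)) x (Quotient.mk _ w))
        = ulim U (fun i => φ.val (Ms i)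
            (Function.update (fun n => v n i) x (w i))) := by
      intro w
      refine (congrArg (φ.val (UStruct U Ms)) (update_mk U Ms v x w)).trans ?_
      rw [ih]
      exact ulim_congr U (by
        refine Filter.univ_mem' (fun i => ?_)
        simp only [Set.mem_setOf_eq]
        rw [update_coord])
    apply le_antisymm
    · refine iSup_le (fun c => ?_)
      have hc : c = Quotient.mk _ c.out := (Quotient.out_eq c).symm
      rw [hc, key c.out]
      exact ulim_le U (Filter.univ_mem' (fun i =>
        le_iSup (fun m => Formula.val (Ms i) φ (Function.update (fun n => v n i) x m)) _))
    · choose w hw using fun i => exists_eq_iSup'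
        (fun m => φ.val (Ms i) (Function.update (fun n => v n i) x m))
      calc ulim U (fun i => ⨆ m, φ.val (Ms i) (Function.update (fun n => v n i) x m))
          = ulim U (fun i => φ.val (Ms i) (Function.update (fun n => v n i) x (w i))) :=
            (ulim_congr U (Filter.univ_mem' (fun i => hw i))).symm
        _ = φ.val (UStruct U Ms)
              (Function.update (fun n => Quotient.mk _ (v n)) x (Quotient.mk _ w)) :=
            (key w).symm
        _ ≤ ⨆ c : (UStruct U Ms).Dom,
              φ.val (UStruct U Ms)
                (Function.update (fun n => Quotient.mk _ (v n)) x c) :=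
            le_iSup (fun c => φ.val (UStruct U Ms)
              (Function.update (fun n => Quotient.mk _ (v n)) x c)) (Quotient.mk _ w)

end Ultra

/-- **A-compactness for satisfiability.**  Let `A` be a fixed finite MTL-chain
and `L` a predicate language.  If `Sig` is a set of `L`-sentences such that
every finite subset `S₀ ⊆ Sig` has an `A`-model, then `Sig` has an `A`-model. -/
theorem A_compactness_satisfiability (A : Type u) [MTLChain A] (L : Lang.{u})
    (Sig : Set (Formula L)) (hsent : ∀ σ ∈ Sig, σ.IsSentence)
    (hfin : ∀ S₀ : Finset (Formula L), ↑S₀ ⊆ Sig →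
      ∃ M : Structure L A, Models M (↑S₀ : Set (Formula L))) :
    ∃ M : Structure L A, Models M Sig := by
  classical
  let I : Type u := {S : Finset (Formula L) // ↑S ⊆ Sig}
  haveI : Nonempty I := ⟨⟨∅, by simp⟩⟩
  choose Ms hMs using fun i : I => hfin i.1 i.2
  let D : Formula L → Set I := fun σ => {i | σ ∈ i.1}
  have hfip : ∀ T : Finset (Set I), (↑T : Set (Set I)) ⊆ D '' Sig →
      (⋂₀ (↑T : Set (Set I))).Nonempty := by
    intro T hT
    choose σ hσ hDσ using fun (s : Set I) (hs : s ∈ T) => hT hs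
    refine ⟨⟨T.attach.image (fun s => σ s.1 s.2), ?_⟩, ?_⟩
    · intro φ hφ
      simp only [Finset.coe_image, Set.mem_image, Finset.mem_coe, Finset.mem_attach] at hφ
      obtain ⟨s, _, rfl⟩ := hφ
      exact hσ s.1 s.2
    · intro s hs
      rw [Finset.mem_coe] at hs
      rw [← hDσ s hs]
      show σ s hs ∈ (⟨T.attach.image (fun s => σ s.1 s.2), _⟩ : I).1
      exact Finset.mem_image_of_mem _ (Finset.mem_attach _ ⟨s, hs⟩)
  obtain ⟨U, hU⟩ := Ultrafilter.exists_ultrafilter_of_finite_inter_nonempty (D '' Sig) hfip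
  refine ⟨UStruct U Ms, fun σ hσ v => ?_⟩
  have hv : v = fun n => Quotient.mk (psetoid U Ms) ((v n).out) :=
    funext fun n => (Quotient.out_eq _).symm
  rw [hv, los U Ms σ (fun n => (v n).out)]
  apply ulim_eq
  have hDm : D σ ∈ U := hU (Set.mem_image_of_mem D hσ)
  refine Filter.mem_of_superset hDm (fun i hi => ?_)
  exact hMs i σ (by exact_mod_cast hi) _
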